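/- Fix m ≥ 1 and σ ∈ NC₂(2m) with Kreweras complement blocks V₁,…,V_{m+1}, each block V_u = {v₁^u < … < v_{l_u}^u}. A tuple i ∈ {1,…,n}^{2m} is N-Catalan corresponding to σ (i.e. |i_{j−1} − i_k| ∨ |i_j − i_{k−1}| ≤ N whenever (j,k) ∈ σ, with i₀ := i_{2m}) if and only if there exist a unique k ∈ S(σ,N) := {k ∈ {−N,…,N}^{2m} : ∑_{j=1}^{l_s} k_{v_j^s} = 0 for s = 1,…,m+1} and a unique 0-Catalan tuple j ∈ {1,…,n}^{2m} corresponding to σ such that i_{v_x^u} = j_{v_x^u} + ∑_{w=1}^{x} k_{v_w^u} for all x, u. -/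

import Mathlib

/-- Cyclic predecessor on `Fin n`. -/
def cpred {n : ℕ} (j : Fin n) : Fin n :=
  ⟨(j.val + n - 1) % n, Nat.mod_lt _ (Nat.lt_of_le_of_lt (Nat.zero_le _) j.isLt)⟩

/-- A fixed-point-free involution of `Fin (2*m)` whose pairing is non-crossing. -/
def IsNCPairing (m : ℕ) (π : Equiv.Perm (Fin (2*m))) : Prop :=
  (∀ j, π (π j) = j) ∧ (∀ j, π j ≠ j) ∧
  ¬ ∃ a b c d : Fin (2*m), a < b ∧ b < c ∧ c < d ∧ π a = c ∧ π b = d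

/-- Position of the interlaced point `(i, b)`: the element `i` sits at `2i`,
its barred copy `ī` at `2i+1`. -/
def interPos (m : ℕ) (p : Fin (2*m) × Bool) : ℕ :=
  2 * p.1.val + (if p.2 then 1 else 0)

/-- The relation on the interlaced set `{1,1̄,…,2m,2m̄}` combining the pairing `π`
(on unbarred points) and the relation `E` (on barred points). -/
def CombinedRel (m : ℕ) (π : Equiv.Perm (Fin (2*m)))
    (E : Fin (2*m) → Fin (2*m) → Prop) (p q : Fin (2*m) × Bool) : Prop :=
  match p, q with
  | (i, false), (j, false) => i = j ∨ π i = j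
  | (i, true), (j, true) => E i j
  | _, _ => False

/-- Non-crossing property of the combined partition `σ ∪ σ̄` on the interlaced set. -/
def CombinedNC (m : ℕ) (π : Equiv.Perm (Fin (2*m)))
    (E : Fin (2*m) → Fin (2*m) → Prop) : Prop :=
  ∀ p q r s : Fin (2*m) × Bool,
    interPos m p < interPos m q → interPos m q < interPos m r →
    interPos m r < interPos m s →
    CombinedRel m π E p r → CombinedRel m π E q s → CombinedRel m π E p q

/-- `E` is (the equivalence relation of) the Kreweras complement of the
non-crossing pairing `π`: it is an equivalence relation on the barred copies such
that `σ ∪ σ̄` is non-crossing, and it is maximal among such relations. -/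
def IsKreweras (m : ℕ) (π : Equiv.Perm (Fin (2*m)))
    (E : Fin (2*m) → Fin (2*m) → Prop) : Prop :=
  Equivalence E ∧ CombinedNC m π E ∧
  ∀ E' : Fin (2*m) → Fin (2*m) → Prop, Equivalence E' → CombinedNC m π E' →
    ∀ i j, E' i j → E i j

/-- Cyclic successor. -/
def csucc {n : ℕ} (j : Fin n) : Fin n :=
  ⟨(j.val + 1) % n, Nat.mod_lt _ (Nat.lt_of_le_of_lt (Nat.zero_le _) j.isLt)⟩

lemma cpred_csucc {n : ℕ} (a : Fin n) : cpred (csucc a) = a := by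
  have ha := a.isLt
  apply Fin.ext
  simp only [cpred, csucc]
  by_cases h : a.val + 1 < n
  · rw [Nat.mod_eq_of_lt h]
    have h2 : a.val + 1 + n - 1 = a.val + n := by omega
    rw [h2, Nat.add_mod_right, Nat.mod_eq_of_lt ha]
  · have h2 : a.val + 1 = n := by omega
    rw [h2, Nat.mod_self]
    have h3 : 0 + n - 1 < n := by omega
    rw [Nat.mod_eq_of_lt h3]
    omega

lemma csucc_cpred {n : ℕ} (a : Fin n) : csucc (cpred a) = a := by
  have ha := a.isLt
  apply Fin.ext
  simp only [cpred, csucc]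
  by_cases h : a.val = 0
  · have h2 : a.val + n - 1 = n - 1 := by omega
    rw [h2, Nat.mod_eq_of_lt (show n - 1 < n by omega),
      show n - 1 + 1 = n by omega, Nat.mod_self, h]
  · have h2 : (a.val + n - 1) % n = a.val - 1 := by
      have h3 : a.val + n - 1 = (a.val - 1) + n := by omega
      rw [h3, Nat.add_mod_right, Nat.mod_eq_of_lt (by omega)]
    rw [h2]
    have : a.val - 1 + 1 = a.val := by omega
    rw [this, Nat.mod_eq_of_lt ha]

lemma csucc_val_cases {n : ℕ} (a : Fin n) :
    (csucc a).val = a.val + 1 ∨ (a.val = n - 1 ∧ (csucc a).val = 0) := by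
  have ha := a.isLt
  by_cases h : a.val + 1 < n
  · left; simp only [csucc]; rw [Nat.mod_eq_of_lt h]
  · right
    constructor
    · omega
    · simp only [csucc]
      have : a.val + 1 = n := by omega
      rw [this, Nat.mod_self]

def tauF {m : ℕ} (π : Equiv.Perm (Fin (2*m))) (a : Fin (2*m)) : Fin (2*m) := π (csucc a)
def tauinvF {m : ℕ} (π : Equiv.Perm (Fin (2*m))) (a : Fin (2*m)) : Fin (2*m) := cpred (π a)

def btw {n : ℕ} (a b c : Fin n) : Prop :=
  (a < c ∧ c < b) ∨ (b ≤ a ∧ a < c) ∨ (b ≤ a ∧ c < b)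

lemma tau_tauinv {m : ℕ} (π : Equiv.Perm (Fin (2*m))) (hinv : ∀ x, π (π x) = x)
    (a : Fin (2*m)) : tauF π (tauinvF π a) = a := by
  simp [tauF, tauinvF, csucc_cpred, hinv]

lemma tauinv_tau {m : ℕ} (π : Equiv.Perm (Fin (2*m))) (hinv : ∀ x, π (π x) = x)
    (a : Fin (2*m)) : tauinvF π (tauF π a) = a := by
  simp [tauF, tauinvF, cpred_csucc, hinv]

lemma noCross {m : ℕ} {π : Equiv.Perm (Fin (2*m))} (hπ : IsNCPairing m π)
    (a x y u v : Fin (2*m)) (hxy : π x = y)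
    (huv : (u = a ∧ v = tauF π a) ∨ (u = tauF π a ∧ v = a)) (hlt : u < v) :
    ¬ ((u < x ∧ x ≤ v ∧ v < y) ∨ (x ≤ u ∧ u < y ∧ y ≤ v)) := by
  obtain ⟨hinv, hfpf, hnc⟩ := hπ
  intro hpat
  have mk : ∀ p q r t : Fin (2*m), p.val < q.val → q.val < r.val → r.val < t.val →
      π p = r → π q = t → False := fun p q r t h1 h2 h3 e1 e2 =>
    hnc ⟨p, q, r, t, Fin.lt_def.mpr h1, Fin.lt_def.mpr h2, Fin.lt_def.mpr h3, e1, e2⟩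
  -- val-level equality test
  have veq : ∀ p q : Fin (2*m), p.val = q.val → p = q := fun p q h => Fin.ext h
  have hπs : π (csucc a) = tauF π a := rfl
  have hπb : π (tauF π a) = csucc a := hinv (csucc a)
  have hsb : (csucc a).val ≠ (tauF π a).val := by
    intro h; exact hfpf (csucc a) ((veq _ _ h).symm ▸ hπs)
  have hyx : π y = x := by rw [← hxy, hinv]
  have hA := a.isLt; have hB := (tauF π a).isLt
  have hX := x.isLt; have hY := y.isLt; have hS := (csucc a).isLt
  rcases huv with ⟨hu, hv⟩ | ⟨hu, hv⟩ <;> rw [hu, hv] at hpat hlt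
  · -- u = a < v = τ a
    have hl := Fin.lt_def.mp hlt
    have hsval : (csucc a).val = a.val + 1 := by
      rcases csucc_val_cases a with h | ⟨h1, h2⟩
      · exact h
      · omega
    rcases hpat with ⟨h1, h2, h3⟩ | ⟨h1, h2, h3⟩
    · -- a < x ≤ b < y
      have h1 := Fin.lt_def.mp h1; have h2 := Fin.le_def.mp h2; have h3 := Fin.lt_def.mp h3
      have hxs : x.val ≠ (csucc a).val := by
        intro h; rw [veq _ _ h, hπs] at hxy
        have : (tauF π a).val = y.val := congrArg Fin.val hxy; omega
      have hxb : x.val ≠ (tauF π a).val := by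
        intro h; rw [veq _ _ h, hπb] at hxy
        have : (csucc a).val = y.val := congrArg Fin.val hxy; omega
      exact mk (csucc a) x (tauF π a) y (by omega) (by omega) (by omega) hπs hxy
    · -- x ≤ a < y ≤ b
      have h1 := Fin.le_def.mp h1; have h2 := Fin.lt_def.mp h2; have h3 := Fin.le_def.mp h3
      have hyb : y.val ≠ (tauF π a).val := by
        intro h; rw [veq _ _ h] at hyx; rw [hπb] at hyx
        have : (csucc a).val = x.val := congrArg Fin.val hyx; omega
      have hys : y.val ≠ (csucc a).val := by
        intro h; rw [veq _ _ h, hπs] at hyx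
        have : (tauF π a).val = x.val := congrArg Fin.val hyx; omega
      exact mk x (csucc a) y (tauF π a) (by omega) (by omega) (by omega) hxy hπs
  · -- u = τ a < v = a
    have hl := Fin.lt_def.mp hlt
    rcases csucc_val_cases a with hsval | ⟨hv1, hv2⟩
    · -- no wrap : s = a+1, b < a < s
      rcases hpat with ⟨h1, h2, h3⟩ | ⟨h1, h2, h3⟩
      · -- b < x ≤ a < y
        have h1 := Fin.lt_def.mp h1; have h2 := Fin.le_def.mp h2; have h3 := Fin.lt_def.mp h3
        have hys : y.val ≠ (csucc a).val := by
          intro h; rw [veq _ _ h, hπs] at hyx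
          have : (tauF π a).val = x.val := congrArg Fin.val hyx; omega
        exact mk (tauF π a) x (csucc a) y (by omega) (by omega) (by omega) hπb hxy
      · -- x ≤ b < y ≤ a
        have h1 := Fin.le_def.mp h1; have h2 := Fin.lt_def.mp h2; have h3 := Fin.le_def.mp h3
        have hxb : x.val ≠ (tauF π a).val := by
          intro h; rw [veq _ _ h, hπb] at hxy
          have : (csucc a).val = y.val := congrArg Fin.val hxy; omega
        exact mk x (tauF π a) y (csucc a) (by omega) (by omega) (by omega) hxy hπb
    · -- wrap : a = 2m-1, s = 0
      rcases hpat with ⟨h1, h2, h3⟩ | ⟨h1, h2, h3⟩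
      · -- b < x ≤ a < y : impossible
        have h2 := Fin.le_def.mp h2; have h3 := Fin.lt_def.mp h3; omega
      · -- x ≤ b < y ≤ a
        have h1 := Fin.le_def.mp h1; have h2 := Fin.lt_def.mp h2; have h3 := Fin.le_def.mp h3
        have hxs : x.val ≠ (csucc a).val := by
          intro h; rw [veq _ _ h, hπs] at hxy
          have : (tauF π a).val = y.val := congrArg Fin.val hxy; omega
        have hxb : x.val ≠ (tauF π a).val := by
          intro h; rw [veq _ _ h, hπb] at hxy
          have : (csucc a).val = y.val := congrArg Fin.val hxy; omega
        exact mk (csucc a) x (tauF π a) y (by omega) (by omega) (by omega) hπs hxy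

-- S1 : E a (tauF π a)
lemma kreweras_succ {m : ℕ} {π : Equiv.Perm (Fin (2*m))} (hπ : IsNCPairing m π)
    {E : Fin (2*m) → Fin (2*m) → Prop} (hE : IsKreweras m π E) (a : Fin (2*m)) :
    E a (tauF π a) := by
  by_cases hfix : tauF π a = a
  · rw [hfix]; exact hE.1.refl a
  · apply hE.2.2 (fun x y => x = y ∨ (x = a ∧ y = tauF π a) ∨ (x = tauF π a ∧ y = a))
    · constructor
      · intro x; exact Or.inl rfl
      · intro x y h
        rcases h with rfl | ⟨h1, h2⟩ | ⟨h1, h2⟩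
        · exact Or.inl rfl
        · exact Or.inr (Or.inr ⟨h2, h1⟩)
        · exact Or.inr (Or.inl ⟨h2, h1⟩)
      · intro x y z h1 h2
        rcases h1 with rfl | ⟨e1, e2⟩ | ⟨e1, e2⟩
        · exact h2
        · rcases h2 with rfl | ⟨f1, f2⟩ | ⟨f1, f2⟩
          · exact Or.inr (Or.inl ⟨e1, e2⟩)
          · exact absurd (f1.symm.trans e2).symm hfix
          · exact Or.inl (e1.trans f2.symm)
        · rcases h2 with rfl | ⟨f1, f2⟩ | ⟨f1, f2⟩
          · exact Or.inr (Or.inr ⟨e1, e2⟩)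
          · exact Or.inl (e1.trans f2.symm)
          · exact absurd (e2.symm.trans f1).symm hfix
    · -- CombinedNC for the single-pair relation
      intro p q r s h1 h2 h3 hpr hqs
      obtain ⟨p1, pb⟩ := p; obtain ⟨q1, qb⟩ := q
      obtain ⟨r1, rb⟩ := r; obtain ⟨s1, sb⟩ := s
      simp only [interPos] at h1 h2 h3
      obtain ⟨hinv, hfpf, hnc⟩ := hπ
      cases pb <;> cases qb <;> cases rb <;> cases sb <;>
        simp only [CombinedRel, if_true, if_false, Bool.false_eq_true] at h1 h2 h3 hpr hqs ⊢ <;>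
        try exact hpr.elim
      all_goals try exact hqs.elim
      · -- all unbarred
        exfalso
        have hpr' : π p1 = r1 := by
          rcases hpr with h | h
          · exact absurd (congrArg Fin.val h) (by omega)
          · exact h
        have hqs' : π q1 = s1 := by
          rcases hqs with h | h
          · exact absurd (congrArg Fin.val h) (by omega)
          · exact h
        exact hnc ⟨p1, q1, r1, s1, Fin.lt_def.mpr (by omega), Fin.lt_def.mpr (by omega),
          Fin.lt_def.mpr (by omega), hpr', hqs'⟩
      · -- p,r unbarred ; q,s barred  (pattern 2 of noCross)
        exfalso
        have hpr' : π p1 = r1 := by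
          rcases hpr with h | h
          · exact absurd (congrArg Fin.val h) (by omega)
          · exact h
        rcases hqs with h | h | h
        · exact absurd (congrArg Fin.val h) (by omega)
        · exact noCross ⟨hinv, hfpf, hnc⟩ a p1 r1 q1 s1 hpr'
            (Or.inl ⟨h.1, h.2⟩) (Fin.lt_def.mpr (by omega))
            (Or.inr ⟨Fin.le_def.mpr (by omega), Fin.lt_def.mpr (by omega),
              Fin.le_def.mpr (by omega)⟩)
        · exact noCross ⟨hinv, hfpf, hnc⟩ a p1 r1 q1 s1 hpr'
            (Or.inr ⟨h.1, h.2⟩) (Fin.lt_def.mpr (by omega))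
            (Or.inr ⟨Fin.le_def.mpr (by omega), Fin.lt_def.mpr (by omega),
              Fin.le_def.mpr (by omega)⟩)
      · -- p,r barred ; q,s unbarred (pattern 1 of noCross)
        exfalso
        have hqs' : π q1 = s1 := by
          rcases hqs with h | h
          · exact absurd (congrArg Fin.val h) (by omega)
          · exact h
        rcases hpr with h | h | h
        · exact absurd (congrArg Fin.val h) (by omega)
        · exact noCross ⟨hinv, hfpf, hnc⟩ a q1 s1 p1 r1 hqs'
            (Or.inl ⟨h.1, h.2⟩) (Fin.lt_def.mpr (by omega))
            (Or.inl ⟨Fin.lt_def.mpr (by omega), Fin.le_def.mpr (by omega),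
              Fin.lt_def.mpr (by omega)⟩)
        · exact noCross ⟨hinv, hfpf, hnc⟩ a q1 s1 p1 r1 hqs'
            (Or.inr ⟨h.1, h.2⟩) (Fin.lt_def.mpr (by omega))
            (Or.inl ⟨Fin.lt_def.mpr (by omega), Fin.le_def.mpr (by omega),
              Fin.lt_def.mpr (by omega)⟩)
      · -- all barred
        exfalso
        rcases hpr with h | h | h
        · exact absurd (congrArg Fin.val h) (by omega)
        all_goals rcases hqs with h' | h' | h'
        all_goals first
          | exact absurd (congrArg Fin.val h') (by omega)
          | (have e1 := congrArg Fin.val h.1; have e2 := congrArg Fin.val h.2;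
             have e3 := congrArg Fin.val h'.1; have e4 := congrArg Fin.val h'.2; omega)
    · exact Or.inr (Or.inl ⟨rfl, rfl⟩)

-- S2 : nothing of the class of a lies strictly cyclically between a and τ a
lemma kreweras_between {m : ℕ} {π : Equiv.Perm (Fin (2*m))} (hπ : IsNCPairing m π)
    {E : Fin (2*m) → Fin (2*m) → Prop} (hE : IsKreweras m π E) (a c : Fin (2*m))
    (hac : E a c) : ¬ _root_.btw a (tauF π a) c := by
  intro hb
  obtain ⟨hinv, hfpf, hnc⟩ := hπ
  have hca : E c a := hE.1.symm hac
  have hπs : π (csucc a) = tauF π a := rfl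
  have hπb : π (tauF π a) = csucc a := hinv (csucc a)
  have hπa : π a = π a := rfl
  have hA := a.isLt; have hB := (tauF π a).isLt
  have hC := c.isLt; have hS := (csucc a).isLt
  have hNC := hE.2.1
  -- helper: conclusion of CombinedNC in mixed cases is False
  have mk : ∀ (x1 : Fin (2*m)) (b1 : Bool) (x2 : Fin (2*m)) (b2 : Bool)
      (x3 : Fin (2*m)) (b3 : Bool) (x4 : Fin (2*m)) (b4 : Bool),
      interPos m (x1,b1) < interPos m (x2,b2) → interPos m (x2,b2) < interPos m (x3,b3) →
      interPos m (x3,b3) < interPos m (x4,b4) →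
      CombinedRel m π E (x1,b1) (x3,b3) → CombinedRel m π E (x2,b2) (x4,b4) →
      b1 = ¬b2 → -- mixed
      False := by
    intro x1 b1 x2 b2 x3 b3 x4 b4 g1 g2 g3 g4 g5 gmix
    have := hNC (x1,b1) (x2,b2) (x3,b3) (x4,b4) g1 g2 g3 g4 g5
    cases b1 <;> cases b2 <;> simp at gmix <;>
      simp only [CombinedRel] at this <;> exact this
  rcases hb with ⟨h1, h2⟩ | ⟨h1, h2⟩ | ⟨h1, h2⟩
  · -- a < c < τ a : quadruple (ā, s, c̄, b)
    have h1 := Fin.lt_def.mp h1; have h2 := Fin.lt_def.mp h2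
    have hsval : (csucc a).val = a.val + 1 := by
      rcases csucc_val_cases a with h | ⟨e1, e2⟩
      · exact h
      · omega
    exact mk a true (csucc a) false c true (tauF π a) false
      (by simp [interPos]; omega) (by simp [interPos]; omega) (by simp [interPos]; omega)
      (by simpa only [CombinedRel] using hac)
      (by simp only [CombinedRel]; exact Or.inr hπs) (by simp)
  · -- τ a ≤ a ∧ a < c
    have h1 := Fin.le_def.mp h1; have h2 := Fin.lt_def.mp h2
    have hsval : (csucc a).val = a.val + 1 := by
      rcases csucc_val_cases a with h | ⟨e1, e2⟩
      · exact h
      · omega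
    rcases eq_or_lt_of_le (Fin.le_def.mpr h1) with heq | hlt
    · -- τ a = a : quadruple (a∘, ā, s, c̄)
      have hπas : π a = csucc a := by conv_lhs => rw [← heq]; rw [hπb]
      exact mk a false a true (csucc a) false c true
        (by simp [interPos]) (by simp [interPos]; omega) (by simp [interPos]; omega)
        (by simp only [CombinedRel]; exact Or.inr hπas)
        (by simpa only [CombinedRel] using hac) (by simp)
    · -- τ a < a : quadruple (b∘, ā, s, c̄)
      have hlt' := Fin.lt_def.mp hlt
      exact mk (tauF π a) false a true (csucc a) false c true
        (by simp [interPos]; omega) (by simp [interPos]; omega) (by simp [interPos]; omega)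
        (by simp only [CombinedRel]; exact Or.inr hπb)
        (by simpa only [CombinedRel] using hac) (by simp)
  · -- τ a ≤ a ∧ c < τ a
    have h1 := Fin.le_def.mp h1; have h2 := Fin.lt_def.mp h2
    rcases csucc_val_cases a with hsval | ⟨hv1, hv2⟩
    · -- no wrap: s = a + 1
      rcases eq_or_lt_of_le (Fin.le_def.mpr h1) with heq | hlt
      · -- τ a = a : quadruple (c̄, a∘, ā, s)
        have hπas : π a = csucc a := by conv_lhs => rw [← heq]; rw [hπb]
        have hba := congrArg Fin.val heq
        exact mk c true a false a true (csucc a) false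
          (by simp [interPos]; omega) (by simp [interPos]) (by simp [interPos]; omega)
          (by simpa only [CombinedRel] using hca)
          (by simp only [CombinedRel]; exact Or.inr hπas) (by simp)
      · -- τ a < a : quadruple (c̄, b∘, ā, s)
        have hlt' := Fin.lt_def.mp hlt
        exact mk c true (tauF π a) false a true (csucc a) false
          (by simp [interPos]; omega) (by simp [interPos]; omega) (by simp [interPos]; omega)
          (by simpa only [CombinedRel] using hca)
          (by simp only [CombinedRel]; exact Or.inr hπb) (by simp)
    · -- wrap: a = 2m-1, s = 0
      rcases eq_or_lt_of_le (Fin.le_def.mpr h1) with heq | hlt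
      · -- τ a = a : quadruple (s∘, c̄, a∘, ā)
        have hπsa : π (csucc a) = a := by rw [hπs, heq]
        have hsa : (csucc a).val ≠ a.val := by
          intro h; exact hfpf (csucc a) (by rw [hπsa]; exact (Fin.ext h).symm)
        exact mk (csucc a) false c true a false a true
          (by simp [interPos]; omega) (by simp [interPos]; omega) (by simp [interPos])
          (by simp only [CombinedRel]; exact Or.inr hπsa)
          (by simpa only [CombinedRel] using hca) (by simp)
      · -- τ a < a : quadruple (s∘, c̄, b∘, ā)
        have hlt' := Fin.lt_def.mp hlt
        exact mk (csucc a) false c true (tauF π a) false a true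
          (by simp [interPos]; omega) (by simp [interPos]; omega) (by simp [interPos]; omega)
          (by simp only [CombinedRel]; exact Or.inr hπs)
          (by simpa only [CombinedRel] using hca) (by simp)

section Struct
variable {m : ℕ} {π : Equiv.Perm (Fin (2*m))} {E : Fin (2*m) → Fin (2*m) → Prop}
  (hEq : Equivalence E)
  (hS1 : ∀ a, E a (tauF π a))
  (hS2 : ∀ a c, E a c → ¬ _root_.btw a (tauF π a) c)
  (hinv : ∀ x, π (π x) = x)

include hEq hS1 hS2

lemma step_up {w t : Fin (2*m)} (h : E w t) (hlt : w < t) :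
    w < tauF π w ∧ tauF π w ≤ t := by
  rcases lt_trichotomy (tauF π w) w with hc | hc | hc
  · exact absurd (Or.inr (Or.inl ⟨le_of_lt hc, hlt⟩)) (hS2 w t h)
  · exact absurd (Or.inr (Or.inl ⟨le_of_eq hc, hlt⟩)) (hS2 w t h)
  · refine ⟨hc, ?_⟩
    by_contra hgt
    push_neg at hgt
    exact (hS2 w t h) (Or.inl ⟨hlt, hgt⟩)

include hinv

lemma step_down {v t mn : Fin (2*m)} (h : E v t)
    (hmn : E mn t ∧ ∀ w, E w t → mn ≤ w) (hlt : mn < v) :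
    tauinvF π v < v ∧ E (tauinvF π v) t := by
  have htv : tauF π (tauinvF π v) = v := tau_tauinv π hinv v
  have hwv : E (tauinvF π v) v := by
    have := hS1 (tauinvF π v); rwa [htv] at this
  have hwt : E (tauinvF π v) t := hEq.trans hwv h
  refine ⟨?_, hwt⟩
  rcases lt_trichotomy (tauinvF π v) v with hc | hc | hc
  · exact hc
  · -- fixed point : class is a singleton, contradicting mn < v
    exfalso
    have hfix : tauF π v = v := by rw [hc] at htv; exact htv
    have hvmn : E v mn := hEq.trans h (hEq.symm (hmn.1))
    exact (hS2 v mn hvmn) (by rw [hfix]; exact Or.inr (Or.inr ⟨le_refl v, hlt⟩))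
  · -- wrap would put mn strictly between
    exfalso
    have hvw : E (tauinvF π v) mn := hEq.trans hwt (hEq.symm hmn.1)
    have := hS2 (tauinvF π v) mn hvw
    rw [htv] at this
    exact this (Or.inr (Or.inr ⟨le_of_lt hc, hlt⟩))

omit hinv

lemma max_wrap {t mx mn : Fin (2*m)}
    (hmx : E mx t ∧ ∀ w, E w t → w ≤ mx) (hmn : E mn t ∧ ∀ w, E w t → mn ≤ w) :
    tauF π mx = mn := by
  have hb : E (tauF π mx) t := hEq.trans (hEq.symm (hS1 mx)) hmx.1
  have hble : tauF π mx ≤ mx := hmx.2 _ hb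
  have hmnle : mn ≤ tauF π mx := hmn.2 _ hb
  rcases eq_or_lt_of_le hmnle with heq | hlt
  · exact heq.symm
  · exfalso
    have hmxmn : E mx mn := hEq.trans hmx.1 (hEq.symm hmn.1)
    exact (hS2 mx mn hmxmn) (Or.inr (Or.inr ⟨hble, hlt⟩))

lemma step_wrap {t mx mn x : Fin (2*m)}
    (hmx : E mx t ∧ ∀ w, E w t → w ≤ mx) (hmn : E mn t ∧ ∀ w, E w t → mn ≤ w)
    (hx : E x t) (hle : tauF π x ≤ x) : x = mx ∧ tauF π x = mn := by
  have hxmx : x = mx := by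
    rcases eq_or_lt_of_le (hmx.2 x hx) with h | h
    · exact h
    · exfalso
      have hxm : E x mx := hEq.trans hx (hEq.symm hmx.1)
      exact (hS2 x mx hxm) (Or.inr (Or.inl ⟨hle, h⟩))
  subst hxmx
  exact ⟨rfl, max_wrap hEq hS1 hS2 hmx hmn⟩

end Struct

/-- Telescoping sum along a Kreweras block. -/
lemma sum_tele {m : ℕ} {π : Equiv.Perm (Fin (2*m))} {E : Fin (2*m) → Fin (2*m) → Prop}
    [DecidableRel E]
    (hEq : Equivalence E) (hS1 : ∀ a, E a (tauF π a))
    (hS2 : ∀ a c, E a c → ¬ _root_.btw a (tauF π a) c) (hinv : ∀ x, π (π x) = x)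
    (i : Fin (2*m) → ℤ) (t mx mn : Fin (2*m))
    (hmx : E mx t ∧ ∀ w, E w t → w ≤ mx) (hmn : E mn t ∧ ∀ w, E w t → mn ≤ w) :
    ∑ w ∈ Finset.univ.filter (fun w => E w t ∧ w ≤ t), (i w - i (tauinvF π w))
      = i t - i mx := by
  have htt : E t t := hEq.refl t
  have hmxnot : mx ∉ Finset.univ.filter (fun w => E w t ∧ w < t) := by
    simp only [Finset.mem_filter, Finset.mem_univ, true_and, not_and]
    intro _ hc
    exact absurd hc (not_lt.mpr (hmx.2 t htt))
  have hsplit : Finset.univ.filter (fun w => E w t ∧ w ≤ t)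
      = insert t (Finset.univ.filter (fun w => E w t ∧ w < t)) := by
    ext w
    simp only [Finset.mem_filter, Finset.mem_univ, true_and, Finset.mem_insert]
    constructor
    · rintro ⟨h1, h2⟩
      rcases eq_or_lt_of_le h2 with h | h
      · exact Or.inl h
      · exact Or.inr ⟨h1, h⟩
    · rintro (h | ⟨h1, h2⟩)
      · rw [h]; exact ⟨htt, le_refl _⟩
      · exact ⟨h1, le_of_lt h2⟩
  have htnot : t ∉ Finset.univ.filter (fun w => E w t ∧ w < t) := by
    simp only [Finset.mem_filter, Finset.mem_univ, true_and, not_and]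
    intro _; exact lt_irrefl t
  rw [Finset.sum_sub_distrib]
  have key : ∑ w ∈ Finset.univ.filter (fun w => E w t ∧ w ≤ t), i (tauinvF π w)
      = ∑ v ∈ insert mx (Finset.univ.filter (fun w => E w t ∧ w < t)), i v := by
    apply Finset.sum_bij' (fun w _ => tauinvF π w) (fun v _ => tauF π v)
    · -- hi : image in target
      intro w hw
      simp only [Finset.mem_filter, Finset.mem_univ, true_and] at hw
      by_cases hwmn : w = mn
      · subst hwmn
        have hmm : tauF π mx = w := max_wrap hEq hS1 hS2 hmx hmn
        have : tauinvF π w = mx := by rw [← hmm, tauinv_tau π hinv]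
        rw [this]
        exact Finset.mem_insert_self _ _
      · have hlt : mn < w := lt_of_le_of_ne (hmn.2 w hw.1) (Ne.symm hwmn)
        obtain ⟨h1, h2⟩ := step_down hEq hS1 hS2 hinv hw.1 hmn hlt
        refine Finset.mem_insert_of_mem ?_
        simp only [Finset.mem_filter, Finset.mem_univ, true_and]
        exact ⟨h2, lt_of_lt_of_le h1 hw.2⟩
    · -- hj
      intro v hv
      rcases Finset.mem_insert.mp hv with rfl | hv'
      · have hmm : tauF π v = mn := max_wrap hEq hS1 hS2 hmx hmn
        rw [hmm]
        simp only [Finset.mem_filter, Finset.mem_univ, true_and]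
        exact ⟨hmn.1, hmn.2 t htt⟩
      · simp only [Finset.mem_filter, Finset.mem_univ, true_and] at hv'
        have hvt : E v t := hv'.1
        obtain ⟨h1, h2⟩ := step_up hEq hS1 hS2 hvt hv'.2
        simp only [Finset.mem_filter, Finset.mem_univ, true_and]
        exact ⟨hEq.trans (hEq.symm (hS1 v)) hvt, h2⟩
    · intro w _; exact tau_tauinv π hinv w
    · intro v _; exact tauinv_tau π hinv v
    · intro w _; rfl
  rw [key, Finset.sum_insert hmxnot, hsplit, Finset.sum_insert htnot]
  ring

/-- Difference of partial sums at x and at τ x. -/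
lemma sum_step {m : ℕ} {π : Equiv.Perm (Fin (2*m))} {E : Fin (2*m) → Fin (2*m) → Prop}
    [DecidableRel E]
    (hEq : Equivalence E) (hS1 : ∀ a, E a (tauF π a))
    (hS2 : ∀ a c, E a c → ¬ _root_.btw a (tauF π a) c) (hinv : ∀ x, π (π x) = x)
    (k : Fin (2*m) → ℤ) (h0 : ∀ t, ∑ w ∈ Finset.univ.filter (fun w => E w t), k w = 0)
    (x : Fin (2*m)) :
    (∑ w ∈ Finset.univ.filter (fun w => E w x ∧ w ≤ x), k w)
      - (∑ w ∈ Finset.univ.filter (fun w => E w (tauF π x) ∧ w ≤ tauF π x), k w)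
      = - k (tauF π x) := by
  have hxy : E x (tauF π x) := hS1 x
  have hyx : E (tauF π x) x := hEq.symm hxy
  have hxx : E x x := hEq.refl x
  -- rewrite the second filter to the class of x
  have hflt : ∀ c : Fin (2*m), Finset.univ.filter (fun w => E w (tauF π x) ∧ w ≤ c)
      = Finset.univ.filter (fun w => E w x ∧ w ≤ c) := by
    intro c
    apply Finset.filter_congr
    intro w _
    constructor
    · rintro ⟨h1, h2⟩; exact ⟨hEq.trans h1 hyx, h2⟩
    · rintro ⟨h1, h2⟩; exact ⟨hEq.trans h1 hxy, h2⟩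
  rw [hflt]
  rcases lt_or_ge x (tauF π x) with hlt | hle
  · -- τ x > x
    have hysplit : Finset.univ.filter (fun w => E w x ∧ w ≤ tauF π x)
        = insert (tauF π x) (Finset.univ.filter (fun w => E w x ∧ w ≤ x)) := by
      ext w
      simp only [Finset.mem_filter, Finset.mem_univ, true_and, Finset.mem_insert]
      constructor
      · rintro ⟨h1, h2⟩
        rcases eq_or_lt_of_le h2 with h | h
        · exact Or.inl h
        · refine Or.inr ⟨h1, ?_⟩
          by_contra hgt
          push_neg at hgt
          exact (hS2 x w (hEq.symm h1)) (Or.inl ⟨hgt, h⟩)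
      · rintro (rfl | ⟨h1, h2⟩)
        · exact ⟨hyx, le_refl _⟩
        · exact ⟨h1, le_trans h2 (le_of_lt hlt)⟩
    have hynot : tauF π x ∉ Finset.univ.filter (fun w => E w x ∧ w ≤ x) := by
      simp only [Finset.mem_filter, Finset.mem_univ, true_and, not_and]
      intro _; exact not_le.mpr hlt
    rw [hysplit, Finset.sum_insert hynot]
    ring
  · -- τ x ≤ x : x is the max, τ x the min of the class
    set B := Finset.univ.filter (fun w => E w x) with hB
    have hBne : x ∈ B := by simp [hB, hxx]
    have hmx0 : E (B.max' ⟨x, hBne⟩) x ∧ ∀ w, E w x → w ≤ B.max' ⟨x, hBne⟩ := by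
      constructor
      · have := B.max'_mem ⟨x, hBne⟩
        simp only [hB, Finset.mem_filter, Finset.mem_univ, true_and] at this
        exact this
      · intro w hw
        exact B.le_max' w (by simp [hB, hw])
    have hmn0 : E (B.min' ⟨x, hBne⟩) x ∧ ∀ w, E w x → B.min' ⟨x, hBne⟩ ≤ w := by
      constructor
      · have := B.min'_mem ⟨x, hBne⟩
        simp only [hB, Finset.mem_filter, Finset.mem_univ, true_and] at this
        exact this
      · intro w hw
        exact B.min'_le w (by simp [hB, hw])
    obtain ⟨hxmx, hymn⟩ := step_wrap hEq hS1 hS2 hmx0 hmn0 hxx hle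
    -- partial sum at x is the whole block sum
    have hfull : Finset.univ.filter (fun w => E w x ∧ w ≤ x) = B := by
      ext w
      simp only [hB, Finset.mem_filter, Finset.mem_univ, true_and]
      constructor
      · rintro ⟨h1, _⟩; exact h1
      · intro h1; exact ⟨h1, hxmx ▸ hmx0.2 w h1⟩
    -- partial sum at min is just k at min
    have hsingle : Finset.univ.filter (fun w => E w x ∧ w ≤ tauF π x) = {tauF π x} := by
      ext w
      simp only [Finset.mem_filter, Finset.mem_univ, true_and, Finset.mem_singleton]
      constructor
      · rintro ⟨h1, h2⟩
        exact le_antisymm h2 (hymn ▸ hmn0.2 w h1)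
      · rintro rfl
        exact ⟨hyx, le_refl _⟩
    rw [hfull, hsingle, Finset.sum_singleton, h0 x]
    ring

lemma max'_congr {α : Type*} [LinearOrder α] {s t : Finset α} (h : s = t)
    (hs : s.Nonempty) (ht : t.Nonempty) : s.max' hs = t.max' ht := by
  subst h; rfl

lemma filter_le_split {m : ℕ} {E : Fin (2*m) → Fin (2*m) → Prop} [DecidableRel E]
    {t : Fin (2*m)} (htt : E t t) :
    Finset.univ.filter (fun w => E w t ∧ w ≤ t)
      = insert t (Finset.univ.filter (fun w => E w t ∧ w < t)) := by
  ext w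
  simp only [Finset.mem_filter, Finset.mem_univ, true_and, Finset.mem_insert]
  constructor
  · rintro ⟨h1, h2⟩
    rcases eq_or_lt_of_le h2 with h | h
    · exact Or.inl h
    · exact Or.inr ⟨h1, h⟩
  · rintro (h | ⟨h1, h2⟩)
    · rw [h]; exact ⟨htt, le_refl _⟩
    · exact ⟨h1, le_of_lt h2⟩

lemma self_not_mem_lt {m : ℕ} {E : Fin (2*m) → Fin (2*m) → Prop} [DecidableRel E]
    {t : Fin (2*m)} : t ∉ Finset.univ.filter (fun w => E w t ∧ w < t) := by
  simp only [Finset.mem_filter, Finset.mem_univ, true_and, not_and]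
  intro _; exact lt_irrefl t

/-- Any admissible decomposition is forced: `j'` is constant on Kreweras classes
and equals `i` at the class maximum. -/
lemma forcedJ {m : ℕ} {π : Equiv.Perm (Fin (2*m))} {E : Fin (2*m) → Fin (2*m) → Prop}
    [DecidableRel E]
    (hEq : Equivalence E) (hS1 : ∀ a, E a (tauF π a))
    (hS2 : ∀ a c, E a c → ¬ _root_.btw a (tauF π a) c) (hinv : ∀ x, π (π x) = x)
    (i k' j' : Fin (2*m) → ℤ)
    (h2 : ∀ t, ∑ w ∈ Finset.univ.filter (fun w => E w t), k' w = 0)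
    (h4 : ∀ a b : Fin (2*m), π a = b → j' (cpred a) = j' b ∧ j' a = j' (cpred b))
    (h5 : ∀ t, i t = j' t + ∑ w ∈ Finset.univ.filter (fun w => E w t ∧ w ≤ t), k' w) :
    (∀ v t, E v t → j' v = j' t) ∧
    (∀ t mx, (E mx t ∧ ∀ w, E w t → w ≤ mx) → j' t = i mx) := by
  have hjt : ∀ x, j' x = j' (tauF π x) := by
    intro x
    have := (h4 (csucc x) (π (csucc x)) rfl).1
    rwa [cpred_csucc] at this
  have hconst : ∀ v t, E v t → j' v = j' t := by
    intro v t hvt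
    have htt : E t t := hEq.refl t
    have hmem : t ∈ Finset.univ.filter (fun w => E w t) := by
      simp only [Finset.mem_filter, Finset.mem_univ, true_and]; exact htt
    set mn := (Finset.univ.filter (fun w => E w t)).min' ⟨t, hmem⟩ with hmndef
    have hmnc : E mn t ∧ ∀ w, E w t → mn ≤ w := by
      constructor
      · have := Finset.min'_mem (Finset.univ.filter (fun w => E w t)) ⟨t, hmem⟩
        simpa using this
      · intro w hw
        exact Finset.min'_le _ w (by simpa using hw)
    have key : ∀ n : ℕ, ∀ v : Fin (2*m), v.val ≤ n → E v t → j' v = j' mn := by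
      intro n
      induction n with
      | zero =>
        intro v hv hvE
        have hveq : v = mn := by
          refine le_antisymm (Fin.le_def.mpr ?_) (hmnc.2 v hvE)
          omega
        rw [hveq]
      | succ n ih =>
        intro v hv hvE
        by_cases hveq : v = mn
        · rw [hveq]
        · have hlt : mn < v := lt_of_le_of_ne (hmnc.2 v hvE) (Ne.symm hveq)
          obtain ⟨hlt2, hE2⟩ := step_down hEq hS1 hS2 hinv hvE hmnc hlt
          have hj : j' (tauinvF π v) = j' v := by
            have h' := hjt (tauinvF π v)
            rwa [tau_tauinv π hinv] at h'
          rw [← hj]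
          exact ih (tauinvF π v) (by have := Fin.lt_def.mp hlt2; omega) hE2
    have e1 := key (2*m) v (le_of_lt v.isLt) hvt
    have e2 := key (2*m) t (le_of_lt t.isLt) htt
    rw [e1, e2]
  refine ⟨hconst, ?_⟩
  intro t mx hmx
  have hfull : Finset.univ.filter (fun w => E w mx ∧ w ≤ mx)
      = Finset.univ.filter (fun w => E w mx) := by
    ext w
    simp only [Finset.mem_filter, Finset.mem_univ, true_and]
    constructor
    · rintro ⟨h1, _⟩; exact h1
    · intro h1; exact ⟨h1, hmx.2 w (hEq.trans h1 hmx.1)⟩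
  have e1 := h5 mx
  rw [hfull, h2 mx] at e1
  have e2 : j' t = j' mx := (hconst mx t hmx.1).symm
  linarith

def mxF {m : ℕ} (E : Fin (2*m) → Fin (2*m) → Prop) [DecidableRel E]
    (hrefl : ∀ t, E t t) (t : Fin (2*m)) : Fin (2*m) :=
  (Finset.univ.filter (fun w => E w t)).max' ⟨t, by simp [hrefl t]⟩

def mnF {m : ℕ} (E : Fin (2*m) → Fin (2*m) → Prop) [DecidableRel E]
    (hrefl : ∀ t, E t t) (t : Fin (2*m)) : Fin (2*m) :=
  (Finset.univ.filter (fun w => E w t)).min' ⟨t, by simp [hrefl t]⟩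

/-- A tuple `i ∈ {1,…,n}^{2m}` is `N`-Catalan corresponding to a non-crossing pair
partition `σ` iff it decomposes uniquely as a `0`-Catalan tuple `j` plus cumulative
increments `k ∈ S(σ,N)` along the blocks of the Kreweras complement. -/
theorem statement12 (m N n : ℕ) (hm : 1 ≤ m) (π : Equiv.Perm (Fin (2*m)))
    (hπ : IsNCPairing m π) (E : Fin (2*m) → Fin (2*m) → Prop) [DecidableRel E]
    (hE : IsKreweras m π E) (i : Fin (2*m) → ℤ) (hi : ∀ t, 1 ≤ i t ∧ i t ≤ (n : ℤ)) :
    (∀ j k : Fin (2*m), π j = k →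
        |i (cpred j) - i k| ≤ (N : ℤ) ∧ |i j - i (cpred k)| ≤ (N : ℤ)) ↔
    ∃! kj : (Fin (2*m) → ℤ) × (Fin (2*m) → ℤ),
      (∀ t, |kj.1 t| ≤ (N : ℤ)) ∧
      (∀ t, ∑ w ∈ Finset.univ.filter (fun w => E w t), kj.1 w = 0) ∧
      (∀ t, 1 ≤ kj.2 t ∧ kj.2 t ≤ (n : ℤ)) ∧
      (∀ j k : Fin (2*m), π j = k → kj.2 (cpred j) = kj.2 k ∧ kj.2 j = kj.2 (cpred k)) ∧
      (∀ t, i t = kj.2 t + ∑ w ∈ Finset.univ.filter (fun w => E w t ∧ w ≤ t), kj.1 w) := by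
  have hEq : Equivalence E := hE.1
  have hinv : ∀ x, π (π x) = x := hπ.1
  have hS1 : ∀ a, E a (tauF π a) := kreweras_succ hπ hE
  have hS2 : ∀ a c, E a c → ¬ _root_.btw a (tauF π a) c := kreweras_between hπ hE
  have hrefl : ∀ t, E t t := hEq.refl
  have htaucp : ∀ a : Fin (2*m), tauF π (cpred a) = π a := fun a => by
    show π (csucc (cpred a)) = π a
    rw [csucc_cpred]
  have hmxc : ∀ t, E (mxF E hrefl t) t ∧ ∀ w, E w t → w ≤ mxF E hrefl t := by
    intro t
    constructor
    · have := Finset.max'_mem (Finset.univ.filter (fun w => E w t))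
        ⟨t, by simp [hrefl t]⟩
      exact (Finset.mem_filter.mp this).2
    · intro w hw
      exact Finset.le_max' _ w (by simpa using hw)
  have hmnc : ∀ t, E (mnF E hrefl t) t ∧ ∀ w, E w t → mnF E hrefl t ≤ w := by
    intro t
    constructor
    · have := Finset.min'_mem (Finset.univ.filter (fun w => E w t))
        ⟨t, by simp [hrefl t]⟩
      exact (Finset.mem_filter.mp this).2
    · intro w hw
      exact Finset.min'_le _ w (by simpa using hw)
  have hmxeq : ∀ t t', E t t' → mxF E hrefl t = mxF E hrefl t' := by
    intro t t' h
    have hBeq : Finset.univ.filter (fun w => E w t)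
        = Finset.univ.filter (fun w => E w t') := by
      apply Finset.filter_congr
      intro w _
      exact ⟨fun hw => hEq.trans hw h, fun hw => hEq.trans hw (hEq.symm h)⟩
    exact max'_congr hBeq _ _
  constructor
  · -- forward
    intro h
    have hdiff : ∀ x : Fin (2*m), |i x - i (tauF π x)| ≤ (N:ℤ) := by
      intro x
      have h' := (h (csucc x) (π (csucc x)) rfl).1
      rwa [cpred_csucc] at h'
    refine ⟨⟨fun w => i w - i (tauinvF π w), fun t => i (mxF E hrefl t)⟩,
      ⟨?_, ?_, ?_, ?_, ?_⟩, ?_⟩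
    · -- |k| ≤ N
      intro t
      have h' := hdiff (tauinvF π t)
      rw [tau_tauinv π hinv, abs_sub_comm] at h'
      exact h'
    · -- block sums vanish
      intro t
      have heq1 : Finset.univ.filter (fun w => E w t)
          = Finset.univ.filter (fun w => E w (mxF E hrefl t) ∧ w ≤ mxF E hrefl t) := by
        ext w
        simp only [Finset.mem_filter, Finset.mem_univ, true_and]
        constructor
        · intro hw
          have h1 : E w (mxF E hrefl t) := hEq.trans hw (hEq.symm (hmxc t).1)
          exact ⟨h1, (hmxc t).2 w hw⟩
        · rintro ⟨h1, _⟩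
          exact hEq.trans h1 (hmxc t).1
      have hmx' : E (mxF E hrefl t) (mxF E hrefl t)
          ∧ ∀ w, E w (mxF E hrefl t) → w ≤ mxF E hrefl t := by
        refine ⟨hrefl _, fun w hw => (hmxc t).2 w (hEq.trans hw (hmxc t).1)⟩
      have hmn' : E (mnF E hrefl t) (mxF E hrefl t)
          ∧ ∀ w, E w (mxF E hrefl t) → mnF E hrefl t ≤ w := by
        refine ⟨hEq.trans (hmnc t).1 (hEq.symm (hmxc t).1),
          fun w hw => (hmnc t).2 w (hEq.trans hw (hmxc t).1)⟩
      rw [heq1, sum_tele hEq hS1 hS2 hinv i (mxF E hrefl t) (mxF E hrefl t)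
        (mnF E hrefl t) hmx' hmn']
      ring
    · -- bounds for j
      intro t
      exact hi (mxF E hrefl t)
    · -- 0-Catalan
      intro a b hab
      constructor
      · have hEcb : E (cpred a) b := by
          have := hS1 (cpred a); rwa [htaucp, hab] at this
        exact congrArg i (hmxeq _ _ hEcb)
      · have hba : π b = a := by rw [← hab, hinv]
        have hEcb : E (cpred b) a := by
          have := hS1 (cpred b); rwa [htaucp, hba] at this
        exact (congrArg i (hmxeq _ _ hEcb)).symm
    · -- decomposition identity
      intro t
      rw [sum_tele hEq hS1 hS2 hinv i t (mxF E hrefl t) (mnF E hrefl t)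
        (hmxc t) (hmnc t)]
      ring
    · -- uniqueness
      rintro ⟨k', j'⟩ ⟨h1, h2, h3, h4, h5⟩
      dsimp only at h1 h2 h3 h4 h5
      obtain ⟨hconst, hforce⟩ := forcedJ hEq hS1 hS2 hinv i k' j' h2 h4 h5
      have hj'eq : ∀ t, j' t = i (mxF E hrefl t) := fun t => hforce t _ (hmxc t)
      have hPk : ∀ t : Fin (2*m),
          ∑ w ∈ Finset.univ.filter (fun w => E w t ∧ w ≤ t), k' w
            = i t - i (mxF E hrefl t) := by
        intro t
        have := h5 t
        rw [hj'eq t] at this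
        linarith
      have hPkk : ∀ t : Fin (2*m),
          ∑ w ∈ Finset.univ.filter (fun w => E w t ∧ w ≤ t),
            (i w - i (tauinvF π w)) = i t - i (mxF E hrefl t) := fun t =>
        sum_tele hEq hS1 hS2 hinv i t _ _ (hmxc t) (hmnc t)
      have hkk : ∀ t : Fin (2*m), k' t = i t - i (tauinvF π t) := by
        have key : ∀ nn : ℕ, ∀ t : Fin (2*m), t.val ≤ nn →
            k' t = i t - i (tauinvF π t) := by
          intro nn
          induction nn with
          | zero =>
            intro t ht
            have e1 := hPk t
            have e2 := hPkk t
            rw [filter_le_split (hrefl t), Finset.sum_insert self_not_mem_lt] at e1 e2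
            have e3 : ∑ w ∈ Finset.univ.filter (fun w => E w t ∧ w < t), k' w
                = ∑ w ∈ Finset.univ.filter (fun w => E w t ∧ w < t),
                  (i w - i (tauinvF π w)) := by
              apply Finset.sum_congr rfl
              intro w hw
              simp only [Finset.mem_filter, Finset.mem_univ, true_and] at hw
              have := Fin.lt_def.mp hw.2
              omega
            linarith
          | succ nn ih =>
            intro t ht
            have e1 := hPk t
            have e2 := hPkk t
            rw [filter_le_split (hrefl t), Finset.sum_insert self_not_mem_lt] at e1 e2
            have e3 : ∑ w ∈ Finset.univ.filter (fun w => E w t ∧ w < t), k' w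
                = ∑ w ∈ Finset.univ.filter (fun w => E w t ∧ w < t),
                  (i w - i (tauinvF π w)) := by
              apply Finset.sum_congr rfl
              intro w hw
              simp only [Finset.mem_filter, Finset.mem_univ, true_and] at hw
              have := Fin.lt_def.mp hw.2
              exact ih w (by omega)
            linarith
        exact fun t => key (2*m) t (le_of_lt t.isLt)
      have hkfun : k' = fun w => i w - i (tauinvF π w) := funext hkk
      have hjfun : j' = fun t => i (mxF E hrefl t) := funext hj'eq
      rw [Prod.mk.injEq]
      exact ⟨hkfun, hjfun⟩
  · -- backward
    rintro ⟨⟨k', j'⟩, ⟨h1, h2, h3, h4, h5⟩, -⟩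
    dsimp only at h1 h2 h3 h4 h5
    have hjt : ∀ x, j' x = j' (tauF π x) := by
      intro x
      have := (h4 (csucc x) (π (csucc x)) rfl).1
      rwa [cpred_csucc] at this
    have hdiff : ∀ x : Fin (2*m), |i x - i (tauF π x)| ≤ (N:ℤ) := by
      intro x
      have e1 := h5 x
      have e2 := h5 (tauF π x)
      have e3 := sum_step hEq hS1 hS2 hinv k' h2 x
      have e4 := hjt x
      have e5 : i x - i (tauF π x) = - k' (tauF π x) := by linarith
      rw [e5, abs_neg]
      exact h1 _
    intro a b hab
    constructor
    · have := hdiff (cpred a)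
      rwa [htaucp, hab] at this
    · have hba : π b = a := by rw [← hab, hinv]
      have := hdiff (cpred b)
      rw [htaucp, hba] at this
      rwa [abs_sub_comm] at this
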